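/- Let P and Q be probability measures on a measurable space, and let P^⊗n and Q^⊗n denote their n-fold product measures. Then the total variation distance satisfies TV(P^⊗n, Q^⊗n) ≤ √( n·D(P‖Q) / 2 ). -/

import Mathlib

open MeasureTheory ProbabilityTheory Real

/-- The Kullback–Leibler divergence `D(P‖Q) = ∫ log(dP/dQ) dP`. -/
noncomputable def klDiv {α : Type*} [MeasurableSpace α] (P Q : Measure α) : ℝ :=
  ∫ x, Real.log ((P.rnDeriv Q) x).toReal ∂P

/-- The total variation distance between two measures: the supremum over
measurable sets `A` of `|P(A) − Q(A)|`. -/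
noncomputable def tvDist {α : Type*} [MeasurableSpace α] (P Q : Measure α) : ℝ :=
  ⨆ A : {s : Set α // MeasurableSet s}, |(P A.1).toReal - (Q A.1).toReal|

section AuxiliaryPinsker
open Set

/-- auxiliary function for Pinsker: `k t = log t - 2(t-1)/(t+1)`. -/
noncomputable def pinK (t : ℝ) : ℝ := Real.log t - 2 * (t - 1) / (t + 1)

lemma pinK_hasDeriv {t : ℝ} (ht : 0 < t) :
    HasDerivAt pinK (t⁻¹ - 4 / (t + 1) ^ 2) t := by
  have h1 : HasDerivAt Real.log t⁻¹ t := Real.hasDerivAt_log (ne_of_gt ht)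
  have hne : t + 1 ≠ 0 := by linarith
  have h2 : HasDerivAt (fun t : ℝ => 2 * (t - 1) / (t + 1))
      ((2 * (t + 1) - 2 * (t - 1) * 1) / (t + 1) ^ 2) t := by
    have := (((hasDerivAt_id t).sub_const 1).const_mul 2).div
      ((hasDerivAt_id t).add_const 1) hne
    exact this.congr_deriv (by simp only [id]; ring)
  have := h1.sub h2
  refine this.congr_deriv ?_
  have h4 : 2 * (t + 1) - 2 * (t - 1) * 1 = 4 := by ring
  rw [h4]

lemma pinK_mono : MonotoneOn pinK (Ioi (0:ℝ)) := by
  have hcont : ContinuousOn pinK (Ioi (0:ℝ)) := fun t ht =>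
    ((pinK_hasDeriv ht).continuousAt).continuousWithinAt
  have hdiff : DifferentiableOn ℝ pinK (interior (Ioi (0:ℝ))) := by
    rw [interior_Ioi]
    exact fun t ht => ((pinK_hasDeriv ht).differentiableAt).differentiableWithinAt
  refine monotoneOn_of_deriv_nonneg (convex_Ioi 0) hcont hdiff ?_
  intro t ht
  rw [interior_Ioi] at ht
  have ht0 : (0:ℝ) < t := ht
  rw [(pinK_hasDeriv ht0).deriv]
  have h1 : t ≠ 0 := ne_of_gt ht0
  have h2 : t + 1 ≠ 0 := ne_of_gt (by linarith)
  have h3 : t⁻¹ - 4 / (t + 1) ^ 2 = (t - 1) ^ 2 / (t * (t + 1) ^ 2) := by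
    field_simp
    ring
  rw [h3]
  have h5 : 0 < t * (t + 1) ^ 2 := mul_pos ht0 (pow_pos (by linarith) 2)
  exact div_nonneg (sq_nonneg _) h5.le

lemma pinK_one : pinK 1 = 0 := by simp [pinK]

/-- `g t = (2t+4)(t log t - t + 1) - 3(t-1)²`. -/
noncomputable def pinG (t : ℝ) : ℝ :=
  (2 * t + 4) * (t * Real.log t - t + 1) - 3 * (t - 1) ^ 2

lemma pinG_hasDeriv {t : ℝ} (ht : 0 < t) :
    HasDerivAt pinG (4 * (t + 1) * pinK t) t := by
  have hlog : HasDerivAt Real.log t⁻¹ t := Real.hasDerivAt_log (ne_of_gt ht)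
  have h1 : HasDerivAt (fun t : ℝ => t * Real.log t) (1 * Real.log t + t * t⁻¹) t :=
    (hasDerivAt_id t).mul hlog
  have h2 : HasDerivAt (fun t : ℝ => t * Real.log t - t + 1) (1 * Real.log t + t * t⁻¹ - 1) t :=
    (h1.sub (hasDerivAt_id t)).add_const 1
  have h3 : HasDerivAt (fun t : ℝ => 2 * t + 4) 2 t := by
    simpa using ((hasDerivAt_id t).const_mul 2).add_const 4
  have h4 : HasDerivAt (fun t : ℝ => 3 * (t - 1) ^ 2) (3 * (2 * (t - 1))) t := by
    have : HasDerivAt (fun t : ℝ => (t - 1) ^ 2) (2 * (t - 1) ^ 1 * 1) t :=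
      ((hasDerivAt_id t).sub_const 1).pow 2
    simpa using this.const_mul 3
  have := (h3.mul h2).sub h4
  refine this.congr_deriv ?_
  have htt : t * t⁻¹ = 1 := mul_inv_cancel₀ (ne_of_gt ht)
  have hne : t + 1 ≠ 0 := by positivity
  unfold pinK
  field_simp
  ring

lemma pinG_one : pinG 1 = 0 := by simp [pinG]

lemma pinG_nonneg {t : ℝ} (ht : 0 ≤ t) : 0 ≤ pinG t := by
  rcases eq_or_lt_of_le ht with h0 | h0
  · simp [pinG, ← h0]
    norm_num
  rcases le_or_gt 1 t with h1 | h1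
  · -- t ≥ 1 : pinG monotone on Ici 1
    have hmono : MonotoneOn pinG (Ici (1:ℝ)) := by
      have hcont : ContinuousOn pinG (Ici (1:ℝ)) := fun s hs =>
        ((pinG_hasDeriv (by linarith [mem_Ici.mp hs] : (0:ℝ) < s)).continuousAt).continuousWithinAt
      have hdiff : DifferentiableOn ℝ pinG (interior (Ici (1:ℝ))) := by
        rw [interior_Ici]
        exact fun s hs =>
          ((pinG_hasDeriv (by linarith [mem_Ioi.mp hs] : (0:ℝ) < s)).differentiableAt).differentiableWithinAt
      refine monotoneOn_of_deriv_nonneg (convex_Ici 1) hcont hdiff ?_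
      intro s hs
      rw [interior_Ici] at hs
      have hs1 : (1:ℝ) < s := hs
      have hs0 : (0:ℝ) < s := by linarith
      rw [(pinG_hasDeriv hs0).deriv]
      have hk : 0 ≤ pinK s := by
        have := pinK_mono (mem_Ioi.mpr one_pos) (mem_Ioi.mpr hs0) hs1.le
        rwa [pinK_one] at this
      have : (0:ℝ) ≤ 4 * (s + 1) := by linarith
      exact mul_nonneg this hk
    have := hmono (mem_Ici.mpr le_rfl) (mem_Ici.mpr h1) h1
    rwa [pinG_one] at this
  · -- 0 < t < 1 : pinG antitone on Ioc 0 1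
    have hanti : AntitoneOn pinG (Ioc (0:ℝ) 1) := by
      have hcont : ContinuousOn pinG (Ioc (0:ℝ) 1) := fun s hs =>
        ((pinG_hasDeriv hs.1).continuousAt).continuousWithinAt
      have hdiff : DifferentiableOn ℝ pinG (interior (Ioc (0:ℝ) 1)) := by
        rw [interior_Ioc]
        exact fun s hs =>
          ((pinG_hasDeriv hs.1).differentiableAt).differentiableWithinAt
      refine antitoneOn_of_deriv_nonpos (convex_Ioc 0 1) hcont hdiff ?_
      intro s hs
      rw [interior_Ioc] at hs
      have hs0 : (0:ℝ) < s := hs.1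
      rw [(pinG_hasDeriv hs0).deriv]
      have hk : pinK s ≤ 0 := by
        have := pinK_mono (mem_Ioi.mpr hs0) (mem_Ioi.mpr one_pos) hs.2.le
        rwa [pinK_one] at this
      have h4 : (0:ℝ) ≤ 4 * (s + 1) := by linarith
      exact mul_nonpos_of_nonneg_of_nonpos h4 hk
    have := hanti (mem_Ioc.mpr ⟨h0, h1.le⟩) (mem_Ioc.mpr ⟨one_pos, le_rfl⟩) h1.le
    rwa [pinG_one] at this

/-- `φ(t) = t log t - t + 1 ≥ 0` for `t ≥ 0`. -/
lemma phi_nonneg {t : ℝ} (ht : 0 ≤ t) : 0 ≤ t * Real.log t - t + 1 := by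
  rcases eq_or_lt_of_le ht with h0 | h0
  · simp [← h0]
  · have hlog : Real.log t⁻¹ ≤ t⁻¹ - 1 := Real.log_le_sub_one_of_pos (by positivity)
    rw [Real.log_inv] at hlog
    have h1 : 1 - t⁻¹ ≤ Real.log t := by linarith
    have h2 : t * (1 - t⁻¹) ≤ t * Real.log t := by
      exact mul_le_mul_of_nonneg_left h1 ht
    have h3 : t * (1 - t⁻¹) = t - 1 := by
      field_simp
    nlinarith

/-- Key pointwise inequality for Pinsker's inequality. -/
lemma pinsker_pointwise {t ε : ℝ} (ht : 0 ≤ t) (hε : 0 < ε) :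
    |t - 1| ≤ ε * (2 * t + 4) / 6 + (t * Real.log t - t + 1) / (2 * ε) := by
  set A : ℝ := ε * (2 * t + 4) / 6 with hA
  set B : ℝ := (t * Real.log t - t + 1) / (2 * ε) with hB
  have hAn : 0 ≤ A := by
    have : (0:ℝ) ≤ 2 * t + 4 := by linarith
    positivity
  have hBn : 0 ≤ B := div_nonneg (phi_nonneg ht) (by linarith)
  have hg := pinG_nonneg ht
  unfold pinG at hg
  have h4AB : (t - 1) ^ 2 ≤ 4 * (A * B) := by
    have : 4 * (A * B) = (2 * t + 4) * (t * Real.log t - t + 1) / 3 := by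
      rw [hA, hB]
      field_simp
      ring
    rw [this]
    linarith
  have hsq : (t - 1) ^ 2 ≤ (A + B) ^ 2 := by nlinarith [sq_nonneg (A - B)]
  calc |t - 1| = Real.sqrt ((t - 1) ^ 2) := (Real.sqrt_sq_eq_abs _).symm
    _ ≤ Real.sqrt ((A + B) ^ 2) := Real.sqrt_le_sqrt hsq
    _ = |A + B| := Real.sqrt_sq_eq_abs _
    _ = A + B := abs_of_nonneg (by linarith)

/-- Core Pinsker argument: for a probability measure `ν` and a probability density `g`
(nonnegative, integral 1) with `g log g` integrable,
`|∫_A g − ν A| ≤ √(∫ g log g / 2)`. -/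
lemma pinsker_core {β : Type*} [MeasurableSpace β] (ν : Measure β) [IsProbabilityMeasure ν]
    {g : β → ℝ} (hg_nonneg : ∀ x, 0 ≤ g x)
    (hg_int : Integrable g ν) (hg1 : ∫ x, g x ∂ν = 1)
    (hgl_int : Integrable (fun x => g x * Real.log (g x)) ν)
    {A : Set β} (hA : MeasurableSet A) :
    |∫ x in A, g x ∂ν - (ν A).toReal| ≤
      Real.sqrt ((∫ x, g x * Real.log (g x) ∂ν) / 2) := by
  set K : ℝ := ∫ x, g x * Real.log (g x) ∂ν with hK
  have hsub_int : Integrable (fun x => g x * Real.log (g x) - g x) ν := hgl_int.sub hg_int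
  have hφ_int : Integrable (fun x => g x * Real.log (g x) - g x + 1) ν :=
    hsub_int.add (integrable_const 1)
  have hφ_integral : ∫ x, (g x * Real.log (g x) - g x + 1) ∂ν = K := by
    rw [integral_add hsub_int (integrable_const 1),
      integral_sub hgl_int hg_int, hg1]
    simp
    exact hK.symm
  have hK_nonneg : 0 ≤ K := by
    rw [← hφ_integral]
    exact integral_nonneg fun x => phi_nonneg (hg_nonneg x)
  set X : ℝ := ∫ x in A, g x ∂ν - (ν A).toReal with hX
  have hgm1_int : Integrable (fun x => g x - 1) ν := hg_int.sub (integrable_const 1)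
  have hXA : X = ∫ x in A, (g x - 1) ∂ν := by
    rw [hX, integral_sub hg_int.integrableOn (integrable_const 1).integrableOn,
      setIntegral_const]
    simp
    rfl
  have hsplit : ∫ x in A, (g x - 1) ∂ν + ∫ x in Aᶜ, (g x - 1) ∂ν = ∫ x, (g x - 1) ∂ν :=
    integral_add_compl hA hgm1_int
  have htot : ∫ x, (g x - 1) ∂ν = 0 := by
    rw [integral_sub hg_int (integrable_const 1), hg1]
    simp
  have habs : 2 * |X| ≤ ∫ x, |g x - 1| ∂ν := by
    have h1 : |∫ x in A, (g x - 1) ∂ν| ≤ ∫ x in A, |g x - 1| ∂ν := by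
      have := norm_integral_le_integral_norm (μ := ν.restrict A) (fun x => g x - 1)
      simpa [Real.norm_eq_abs] using this
    have h2 : |∫ x in Aᶜ, (g x - 1) ∂ν| ≤ ∫ x in Aᶜ, |g x - 1| ∂ν := by
      have := norm_integral_le_integral_norm (μ := ν.restrict Aᶜ) (fun x => g x - 1)
      simpa [Real.norm_eq_abs] using this
    have h3 : ∫ x in A, |g x - 1| ∂ν + ∫ x in Aᶜ, |g x - 1| ∂ν = ∫ x, |g x - 1| ∂ν :=
      integral_add_compl hA hgm1_int.abs
    have h4 : ∫ x in Aᶜ, (g x - 1) ∂ν = -X := by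
      rw [hXA]; linarith
    rw [h4, abs_neg] at h2
    rw [← hXA] at h1
    linarith
  have hstep : ∀ ε : ℝ, 0 < ε → |X| ≤ ε / 2 + K / (4 * ε) := by
    intro ε hε
    have hptw : ∀ x, |g x - 1| ≤
        ε * (2 * g x + 4) / 6 + (g x * Real.log (g x) - g x + 1) / (2 * ε) :=
      fun x => pinsker_pointwise (hg_nonneg x) hε
    have hI0a : Integrable (fun x => 2 * g x) ν := hg_int.const_mul 2
    have hI0 : Integrable (fun x => 2 * g x + 4) ν := hI0a.add (integrable_const 4)
    have hI1 : Integrable (fun x => ε * (2 * g x + 4)) ν := hI0.const_mul ε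
    have hI1' : Integrable (fun x => ε * (2 * g x + 4) / 6) ν := hI1.div_const 6
    have hI2 : Integrable (fun x => (g x * Real.log (g x) - g x + 1) / (2 * ε)) ν :=
      hφ_int.div_const (2 * ε)
    have hrhs_int := hI1'.add hI2
    have hmono : ∫ x, |g x - 1| ∂ν ≤
        ∫ x, (ε * (2 * g x + 4) / 6 + (g x * Real.log (g x) - g x + 1) / (2 * ε)) ∂ν :=
      integral_mono hgm1_int.abs hrhs_int hptw
    have he0 : ∫ x, (2 * g x + 4) ∂ν = 6 := by
      rw [integral_add hI0a (integrable_const 4), integral_const_mul, hg1]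
      simp
      norm_num
    have hcomp : ∫ x, (ε * (2 * g x + 4) / 6 + (g x * Real.log (g x) - g x + 1) / (2 * ε)) ∂ν
        = ε + K / (2 * ε) := by
      rw [integral_add hI1' hI2, integral_div, integral_div, hφ_integral,
        integral_const_mul, he0]
      field_simp
    rw [hcomp] at hmono
    have h2ε : K / (2 * ε) / 2 = K / (4 * ε) := by ring
    linarith
  rcases eq_or_lt_of_le hK_nonneg with h0 | h0
  · have hX0 : |X| ≤ 0 := by
      refine le_of_forall_pos_le_add ?_
      intro ε hε
      have h1 := hstep ε hε
      rw [← h0] at h1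
      simp only [zero_div] at h1
      linarith
    have hs0 : Real.sqrt (K / 2) = 0 := by rw [← h0]; norm_num
    calc |X| ≤ 0 := hX0
      _ = Real.sqrt (K / 2) := hs0.symm
  · set s : ℝ := Real.sqrt (K / 2) with hs
    have hε : (0:ℝ) < s := Real.sqrt_pos.mpr (by linarith)
    have hb := hstep _ hε
    have hsq : s ^ 2 = K / 2 := Real.sq_sqrt (by linarith)
    have hKeq : K = 2 * s ^ 2 := by linarith
    have hkey : s / 2 + K / (4 * s) = s := by
      rw [hKeq]
      field_simp
      ring
    calc |X| ≤ s / 2 + K / (4 * s) := hb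
      _ = s := hkey

/-- Expansion of `(∏ v i) log (∏ v i)` as a sum, valid for nonnegative `v`
(using `log 0 = 0`). -/
lemma prod_mul_log_prod {n : ℕ} (v : Fin n → ℝ) (hv : ∀ i, 0 ≤ v i) :
    (∏ i, v i) * Real.log (∏ i, v i) =
      ∑ j, ∏ i, (if i = j then v i * Real.log (v i) else v i) := by
  by_cases hz : ∃ k, v k = 0
  · obtain ⟨k, hk⟩ := hz
    have hP : (∏ i, v i) = 0 := Finset.prod_eq_zero (Finset.mem_univ k) hk
    rw [hP]
    rw [zero_mul]
    symm
    apply Finset.sum_eq_zero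
    intro j _
    apply Finset.prod_eq_zero (Finset.mem_univ k)
    by_cases hjk : k = j
    · rw [if_pos hjk, hk, zero_mul]
    · rw [if_neg hjk, hk]
  · push_neg at hz
    rw [Real.log_prod fun i _ => hz i, Finset.mul_sum]
    apply Finset.sum_congr rfl
    intro j _
    rw [← Finset.mul_prod_erase Finset.univ v (Finset.mem_univ j),
      ← Finset.mul_prod_erase Finset.univ _ (Finset.mem_univ j), if_pos rfl]
    have hrest : ∏ i ∈ Finset.univ.erase j, (if i = j then v i * Real.log (v i) else v i)
        = ∏ i ∈ Finset.univ.erase j, v i := by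
      apply Finset.prod_congr rfl
      intro i hi
      rw [if_neg (Finset.ne_of_mem_erase hi)]
    rw [hrest]
    ring

section ProductDensity

variable {α : Type*} [MeasureSpace α] [IsProbabilityMeasure (volume : Measure α)]
  (P : Measure α) [IsProbabilityMeasure P]

/-- The `n`-fold product of `P` has density `∏ i, dP/dQ (x i)` with respect to the
`n`-fold product of `Q` (here `Q = volume`). -/
lemma pi_eq_withDensity_prod_rnDeriv (hac : P ≪ (volume : Measure α)) (n : ℕ) :
    Measure.pi (fun _ : Fin n => P) =
      (Measure.pi fun _ : Fin n => (volume : Measure α)).withDensity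
        (fun x => ∏ i, P.rnDeriv volume (x i)) := by
  set d : α → ENNReal := P.rnDeriv volume with hd
  set f : α → ℝ := fun a => (d a).toReal with hf
  have hfin : (volume : Measure α) {a | d a = ⊤} = 0 := by
    have h := Measure.rnDeriv_lt_top P (volume : Measure α)
    rw [ae_iff] at h
    simpa [lt_top_iff_ne_top, not_not] using h
  apply Measure.pi_eq
  intro s hs
  rw [withDensity_apply _ (MeasurableSet.univ_pi hs)]
  rw [← lintegral_indicator (MeasurableSet.univ_pi hs)]
  have hind : (Set.pi Set.univ s).indicator (fun x : Fin n → α => ∏ i, d (x i))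
      = fun x => ∏ i, (s i).indicator d (x i) := by
    funext x
    by_cases hx : x ∈ Set.pi Set.univ s
    · rw [Set.indicator_of_mem hx]
      apply Finset.prod_congr rfl
      intro i _
      rw [Set.indicator_of_mem (hx i (Set.mem_univ i))]
    · rw [Set.indicator_of_notMem hx]
      symm
      rw [Set.mem_univ_pi] at hx
      push_neg at hx
      obtain ⟨i, hi⟩ := hx
      exact Finset.prod_eq_zero (Finset.mem_univ i) (Set.indicator_of_notMem hi _)
  rw [hind]
  have hae : ∀ᵐ x ∂(Measure.pi fun _ : Fin n => (volume : Measure α)), ∀ i, d (x i) ≠ ⊤ := by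
    rw [ae_all_iff]
    intro i
    rw [ae_iff]
    refine measure_mono_null ?_
      (Measure.pi_eval_preimage_null (μ := fun _ : Fin n => (volume : Measure α))
        (i := i) hfin)
    intro x hx
    exact not_not.mp hx
  have hcongr : ∀ᵐ x ∂(Measure.pi fun _ : Fin n => (volume : Measure α)),
      (∏ i, (s i).indicator d (x i)) =
        ENNReal.ofReal (∏ i, (s i).indicator f (x i)) := by
    filter_upwards [hae] with x hx
    have hfactor : ∀ i, (s i).indicator d (x i) ≠ ⊤ := by
      intro i
      by_cases hm : x i ∈ s i
      · rw [Set.indicator_of_mem hm]; exact hx i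
      · rw [Set.indicator_of_notMem hm]; exact ENNReal.zero_ne_top
    rw [← ENNReal.ofReal_toReal (ENNReal.prod_ne_top fun i _ => hfactor i),
      ENNReal.toReal_prod]
    congr 1
    apply Finset.prod_congr rfl
    intro i _
    by_cases hm : x i ∈ s i
    · rw [Set.indicator_of_mem hm, Set.indicator_of_mem hm]
    · rw [Set.indicator_of_notMem hm, Set.indicator_of_notMem hm]
      simp
  rw [lintegral_congr_ae hcongr]
  have hf_int : Integrable f (volume : Measure α) := Measure.integrable_toReal_rnDeriv
  have hInt : Integrable (fun x : Fin n → α => ∏ i, (s i).indicator f (x i))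
      (Measure.pi fun _ : Fin n => (volume : Measure α)) := by
    rw [← volume_pi]
    exact Integrable.fin_nat_prod (E := fun _ : Fin n => α)
      (f := fun i => (s i).indicator f) fun i => hf_int.indicator (hs i)
  have hnn : 0 ≤ᵐ[Measure.pi fun _ : Fin n => (volume : Measure α)]
      fun x : Fin n → α => ∏ i, (s i).indicator f (x i) := by
    refine Filter.Eventually.of_forall fun x => ?_
    exact Finset.prod_nonneg fun i _ =>
      Set.indicator_nonneg (fun a _ => ENNReal.toReal_nonneg) _
  rw [← ofReal_integral_eq_lintegral_ofReal hInt hnn]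
  have hval : ∫ x : Fin n → α, ∏ i, (s i).indicator f (x i)
      ∂(Measure.pi fun _ : Fin n => (volume : Measure α)) = ∏ i, (P (s i)).toReal := by
    rw [integral_fin_nat_prod_eq_prod (E := fun _ : Fin n => α)
      (f := fun i => (s i).indicator f)]
    apply Finset.prod_congr rfl
    intro i _
    rw [integral_indicator (hs i)]
    exact Measure.setIntegral_toReal_rnDeriv hac (s i)
  rw [hval]
  rw [← ENNReal.toReal_prod, ENNReal.ofReal_toReal]
  exact ENNReal.prod_ne_top fun i _ => measure_ne_top P _

end ProductDensity

end AuxiliaryPinsker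

/-- Let `P` and `Q` be probability measures, with `P ≪ Q` and the
log-likelihood ratio `P`-integrable (so that the Kullback–Leibler divergence
`D(P‖Q)` is finite and given by `∫ log(dP/dQ) dP`).  Then the total variation
distance between the `n`-fold products satisfies
`TV(P^⊗n, Q^⊗n) ≤ √(n·D(P‖Q)/2)`. -/
theorem stmt_3 {α : Type*} [MeasurableSpace α] (P Q : Measure α)
    [IsProbabilityMeasure P] [IsProbabilityMeasure Q] (n : ℕ)
    (hac : P ≪ Q)
    (hint : Integrable (fun x => Real.log ((P.rnDeriv Q) x).toReal) P) :
    tvDist (Measure.pi fun _ : Fin n => P) (Measure.pi fun _ : Fin n => Q)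
      ≤ Real.sqrt (n * klDiv P Q / 2) := by
  letI : MeasureSpace α := ⟨Q⟩
  haveI : IsProbabilityMeasure (volume : Measure α) := ‹IsProbabilityMeasure Q›
  set d : α → ENNReal := P.rnDeriv Q with hd
  set f : α → ℝ := fun a => (d a).toReal with hf
  have hpi : Measure.pi (fun _ : Fin n => P) =
      (Measure.pi fun _ : Fin n => Q).withDensity (fun x => ∏ i, d (x i)) :=
    pi_eq_withDensity_prod_rnDeriv P hac n
  have hmeas_prod : Measurable fun x : Fin n → α => ∏ i, d (x i) :=
    Finset.measurable_prod _ fun i _ =>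
      (Measure.measurable_rnDeriv P Q).comp (measurable_pi_apply i)
  have hacn : Measure.pi (fun _ : Fin n => P) ≪ Measure.pi fun _ : Fin n => Q := by
    rw [hpi]
    exact withDensity_absolutelyContinuous _ _
  have hrn : (Measure.pi fun _ : Fin n => P).rnDeriv (Measure.pi fun _ : Fin n => Q)
      =ᵐ[Measure.pi fun _ : Fin n => Q] fun x => ∏ i, d (x i) := by
    rw [hpi]
    exact Measure.rnDeriv_withDensity _ hmeas_prod
  set g : (Fin n → α) → ℝ := fun x =>
    ((Measure.pi fun _ : Fin n => P).rnDeriv (Measure.pi fun _ : Fin n => Q) x).toReal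
    with hg
  set G : (Fin n → α) → ℝ := fun x => ∏ i, f (x i) with hG
  have hgG : g =ᵐ[Measure.pi fun _ : Fin n => Q] G := by
    filter_upwards [hrn] with x hx
    rw [hg, hG]
    simp only
    rw [hx, ENNReal.toReal_prod]
  -- integrability facts on α
  have hflogf : Integrable (fun a => f a * Real.log (f a)) Q := by
    have := (MeasureTheory.integrable_rnDeriv_smul_iff hac).mpr hint
    simpa [smul_eq_mul] using this
  have hf_int : Integrable f Q := Measure.integrable_toReal_rnDeriv
  -- expansion of G log G
  have hsum : ∀ x : Fin n → α, G x * Real.log (G x) =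
      ∑ j, ∏ i, (if i = j then f (x i) * Real.log (f (x i)) else f (x i)) :=
    fun x => prod_mul_log_prod (fun i => f (x i)) fun i => ENNReal.toReal_nonneg
  have hterm_rw : ∀ j : Fin n,
      (fun x : Fin n → α => ∏ i, (if i = j then f (x i) * Real.log (f (x i)) else f (x i)))
      = fun x => ∏ i, (if i = j then (fun a => f a * Real.log (f a)) else f) (x i) := by
    intro j
    funext x
    apply Finset.prod_congr rfl
    intro i _
    by_cases h : i = j <;> simp [h]
  have hterm_int : ∀ j : Fin n, Integrable
      (fun x : Fin n → α => ∏ i, (if i = j then f (x i) * Real.log (f (x i)) else f (x i)))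
      (Measure.pi fun _ : Fin n => Q) := by
    intro j
    rw [hterm_rw j, show (Measure.pi fun _ : Fin n => Q) = (volume : Measure (Fin n → α))
      from volume_pi.symm]
    refine Integrable.fin_nat_prod (E := fun _ : Fin n => α) fun i => ?_
    rcases eq_or_ne i j with h | h
    · rw [if_pos h]; exact hflogf
    · rw [if_neg h]; exact hf_int
  have hGlog_int : Integrable (fun x => G x * Real.log (G x))
      (Measure.pi fun _ : Fin n => Q) := by
    have hfe : (fun x : Fin n → α => G x * Real.log (G x)) = fun x =>
        ∑ j, ∏ i, (if i = j then f (x i) * Real.log (f (x i)) else f (x i)) := funext hsum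
    rw [hfe]
    exact integrable_finset_sum _ fun j _ => hterm_int j
  have hglog_int : Integrable (fun x => g x * Real.log (g x))
      (Measure.pi fun _ : Fin n => Q) := by
    refine hGlog_int.congr ?_
    filter_upwards [hgG] with x hx
    rw [hx]
  -- value of K
  have hDval : ∫ a, f a * Real.log (f a) ∂Q = klDiv P Q := by
    have h := MeasureTheory.integral_rnDeriv_smul hac (f := fun a => Real.log (f a))
    simp only [smul_eq_mul] at h
    rw [hf]
    exact h
  have hK : ∫ x, g x * Real.log (g x) ∂(Measure.pi fun _ : Fin n => Q)
      = n * klDiv P Q := by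
    rw [integral_congr_ae (by filter_upwards [hgG] with x hx; rw [hx] :
      (fun x => g x * Real.log (g x)) =ᵐ[Measure.pi fun _ : Fin n => Q]
        fun x => G x * Real.log (G x))]
    rw [funext hsum]
    rw [integral_finset_sum _ fun j _ => hterm_int j]
    have hterm_val : ∀ j : Fin n,
        ∫ x, ∏ i, (if i = j then f (x i) * Real.log (f (x i)) else f (x i))
          ∂(Measure.pi fun _ : Fin n => Q) = klDiv P Q := by
      intro j
      rw [hterm_rw j, show (Measure.pi fun _ : Fin n => Q) = (volume : Measure (Fin n → α))
        from volume_pi.symm]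
      rw [volume_pi, integral_fin_nat_prod_eq_prod (E := fun _ : Fin n => α)
        (f := fun i => (if i = j then (fun a => f a * Real.log (f a)) else f))]
      have hone : ∫ a, f a ∂Q = 1 := by
        rw [hf, hd, Measure.integral_toReal_rnDeriv hac, probReal_univ]
      have : ∀ i : Fin n, (∫ a, (if i = j then (fun a => f a * Real.log (f a)) else f) a
          ∂(volume : Measure α)) = if i = j then klDiv P Q else 1 := by
        intro i
        rcases eq_or_ne i j with h | h
        · rw [if_pos h, if_pos h]; exact hDval
        · rw [if_neg h, if_neg h]; exact hone
      rw [Finset.prod_congr rfl fun i _ => this i]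
      simp [Finset.prod_ite_eq']
    rw [Finset.sum_congr rfl fun j _ => hterm_val j]
    simp [Finset.sum_const, Finset.card_univ]
  -- conclude via pinsker_core
  rw [tvDist]
  have hne : Nonempty {s : Set (Fin n → α) // MeasurableSet s} :=
    ⟨⟨∅, MeasurableSet.empty⟩⟩
  refine ciSup_le fun A => ?_
  obtain ⟨A, hA⟩ := A
  have hcore := pinsker_core (Measure.pi fun _ : Fin n => Q) (g := g)
    (fun x => ENNReal.toReal_nonneg)
    Measure.integrable_toReal_rnDeriv
    (by rw [hg]
        simp only
        rw [Measure.integral_toReal_rnDeriv hacn, probReal_univ])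
    hglog_int hA
  rw [hK] at hcore
  have hPA : ∫ x in A, g x ∂(Measure.pi fun _ : Fin n => Q)
      = ((Measure.pi fun _ : Fin n => P) A).toReal :=
    Measure.setIntegral_toReal_rnDeriv hacn A
  rw [hPA] at hcore
  exact hcore
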